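/- arXiv:2111.12850 — 3 statements merged into one kernel-verified Lean document; each statement's English description precedes it below -/
import Mathlib

section
/- For n ≥ 2 and every integer t with 1 ≤ t ≤ 2^{n−2}, there exists exactly one α ∈ {1,...,n}^n such that the probability that α parks in the random 1-Naples model with p = 1/2 equals (2t−1)/2^{n−1}. -/
/-- The first spot in the list `l` not in `occ`, if any. -/
def firstFree (occ : Finset ℕ) (l : List ℕ) : Option ℕ :=
  l.find? (fun s => decide (s ∉ occ))

/-- Run a parking simulation: each car is a pair (preference, coin); `step`
decides where a car parks (or `none` if it fails). Returns `true` iff all cars park. -/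
def runPark (step : Finset ℕ → ℕ → Bool → Option ℕ) :
    List (ℕ × Bool) → Finset ℕ → Bool
  | [], _ => true
  | (a, b) :: rest, occ =>
    match step occ a b with
    | none => false
    | some s => runPark step rest (insert s occ)

/-- Run a parking simulation, returning the final set of occupied spots
(cars that fail to park simply do not park). -/
def runOcc (step : Finset ℕ → ℕ → Bool → Option ℕ) :
    List (ℕ × Bool) → Finset ℕ → Finset ℕ
  | [], occ => occ
  | (a, b) :: rest, occ =>
    match step occ a b with
    | none => runOcc step rest occ
    | some s => runOcc step rest (insert s occ)

/-- Random-direction step on spots `1,…,n`: if the preferred spot `a` is free, take it;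
otherwise if the coin says forward, take the first free spot among `a+1,…,n`;
otherwise take the first free spot among `a-1,…,1`. -/
def dirStep (n : ℕ) (occ : Finset ℕ) (a : ℕ) (fwd : Bool) : Option ℕ :=
  if a ∉ occ then some a
  else if fwd then firstFree occ (List.range' (a + 1) (n - a))
  else firstFree occ ((List.range' 1 (a - 1)).reverse)

/-- Random `k`-Naples step on spots `1,…,n`: if the preferred spot `a` is free, take it;
otherwise, if the coin says to back up, check spots `a-1, a-2, …, max(a-k,1)` one by one
taking the first free one; if none (or if the coin says not to back up), take the first
free spot among `a+1,…,n`. -/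
def naplesStep (n k : ℕ) (occ : Finset ℕ) (a : ℕ) (back : Bool) : Option ℕ :=
  if a ∉ occ then some a
  else
    let fwd := firstFree occ (List.range' (a + 1) (n - a))
    if back then
      match firstFree occ ((List.range' (max (a - k) 1) (min k (a - 1))).reverse) with
      | some s => some s
      | none => fwd
    else fwd

/-- Circular random-direction step on spots `1,…,n+1` arranged in a circle:
if the preferred spot `a` is free, take it; otherwise search clockwise
(`a+1, a+2, …` wrapping around) or counterclockwise according to the coin. -/
def circStep (n : ℕ) (occ : Finset ℕ) (a : ℕ) (cw : Bool) : Option ℕ :=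
  if a ∉ occ then some a
  else if cw then
    firstFree occ (List.range' (a + 1) (n + 1 - a) ++ List.range' 1 (a - 1))
  else
    firstFree occ ((List.range' 1 (a - 1)).reverse ++ (List.range' (a + 1) (n + 1 - a)).reverse)

/-- Whether all `n` cars with preferences `α` park in the random-direction model on spots
`1,…,n` with coins `b` (`b i = true` means car `i` searches forward when its spot is taken). -/
def parksDir (n : ℕ) (α : Fin n → ℕ) (b : Fin n → Bool) : Bool :=
  runPark (dirStep n) (List.ofFn (fun i => (α i, b i))) ∅

/-- Whether all `n` cars with preferences `α` park in the `k`-Naples model on spots `1,…,n`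
with coins `b` (`b i = true` means car `i` backs up when its spot is taken). -/
def parksNaples (n k : ℕ) (α : Fin n → ℕ) (b : Fin n → Bool) : Bool :=
  runPark (naplesStep n k) (List.ofFn (fun i => (α i, b i))) ∅

/-- The probability that all cars park in the random-direction model, where each car
whose spot is taken independently searches forward with probability `p` and backward
with probability `1 - p`. -/
noncomputable def probDir (n : ℕ) (p : ℝ) (α : Fin n → ℕ) : ℝ :=
  ∑ b : Fin n → Bool,
    (∏ i, if b i then p else 1 - p) * (if parksDir n α b then 1 else 0)

/-- The probability that all cars park in the random `k`-Naples model, where each car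
whose spot is taken independently backs up (up to) `k` spots with probability `p`. -/
noncomputable def probNaples (n k : ℕ) (p : ℝ) (α : Fin n → ℕ) : ℝ :=
  ∑ b : Fin n → Bool,
    (∏ i, if b i then p else 1 - p) * (if parksNaples n k α b then 1 else 0)

/-- The deterministic 1-Naples simulation for choices `β = (β₂,…,βₙ) ∈ {0,1}^{n-1}`:
car `i ≥ 2` backs up one spot first iff `β i = false` (i.e. `βᵢ = 0`); car 1's choice
is irrelevant since its preferred spot is always free. -/
def parksUnder (n : ℕ) (α : Fin n → ℕ) (β : Fin (n - 1) → Bool) : Bool :=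
  parksNaples n 1 α
    (fun i => if h : 0 < i.1 then !(β ⟨i.1 - 1, by have := i.2; omega⟩) else false)

/-- `g α`: the number of choice sequences `β ∈ {0,1}^{n-1}` under which `α` parks in the
deterministic 1-Naples simulation. -/
def g (n : ℕ) (α : Fin n → ℕ) : ℕ :=
  (Finset.univ.filter (fun β : Fin (n - 1) → Bool => parksUnder n α β = true)).card

/-- `α` is a parking function: every car parks when each car whose preferred spot is taken
only searches forward. -/
def forwardParks (n : ℕ) (α : Fin n → ℕ) : Bool :=
  parksNaples n 0 α (fun _ => false)

/-- `α` is a 1-Naples parking function: every car parks when each car whose preferred spot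
is taken always backs up one spot first. -/
def naplesParks (n : ℕ) (α : Fin n → ℕ) : Bool :=
  parksNaples n 1 α (fun _ => true)

/-- The expected number of random `k`-Naples parking functions on `n` cars. -/
noncomputable def T (k : ℕ) (p : ℝ) (n : ℕ) : ℝ :=
  ∑ α : Fin n → Fin n, probNaples n k p (fun i => (α i).1 + 1)

/-- The staircase preference list: `m t` copies of `t`, then `m (t-1)` copies of `t-1`,
…, down to `m 2` copies of `2`. -/
def stair (t : ℕ) (m : ℕ → ℕ) : List ℕ :=
  ((List.range' 2 (t - 1)).reverse).flatMap (fun j => List.replicate (m j) j)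

/-- The staircase condition on a preference tuple: `α₁ = α₂`, each entry decreases by
`0` or `1`, and `αₙ = 2`. -/
def Staircase {n : ℕ} (hn : 2 ≤ n) (α : Fin n → ℕ) : Prop :=
  α ⟨0, by omega⟩ = α ⟨1, by omega⟩ ∧
  (∀ i : ℕ, (h : i + 1 < n) →
    α ⟨i + 1, h⟩ = α ⟨i, by omega⟩ ∨ α ⟨i + 1, h⟩ + 1 = α ⟨i, by omega⟩) ∧
  α ⟨n - 1, by omega⟩ = 2

/-- The number of 1-Naples parking functions on `n` cars. -/
def Nnum (n : ℕ) : ℕ :=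
  (Finset.univ.filter
    (fun α : Fin n → Fin n => naplesParks n (fun i => (α i).1 + 1) = true)).card
/-- popcount -/
def pc : ℕ → ℕ
  | 0 => 0
  | (x+1) => (x+1) % 2 + pc ((x+1)/2)
decreasing_by omega

lemma pc_rec (x : ℕ) : pc x = x % 2 + pc (x/2) := by
  cases x with
  | zero => simp [pc]
  | succ y => rw [pc]

lemma pc_le {m X : ℕ} (h : X < 2^m) : pc X ≤ m := by
  induction m generalizing X with
  | zero => interval_cases X; simp [pc]
  | succ m ih =>
    rw [pc_rec]
    have h2 : X / 2 < 2 ^ m := by omega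
    have := ih h2
    omega

lemma pc_max {m X : ℕ} (h : X < 2^m) (h2 : pc X = m) : X = 2^m - 1 := by
  induction m generalizing X with
  | zero => omega
  | succ m ih =>
    rw [pc_rec] at h2
    have h3 : X / 2 < 2 ^ m := by omega
    have h4 := pc_le h3
    have h5 : X / 2 = 2 ^ m - 1 := ih h3 (by omega)
    have : 1 ≤ 2^m := Nat.one_le_two_pow
    omega

lemma pc_shiftRight_le (X k : ℕ) : pc (X >>> k) ≤ pc X := by
  induction k with
  | zero => simp
  | succ k ih =>
    rw [Nat.shiftRight_succ]
    have := pc_rec (X >>> k)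
    omega

lemma naplesStep_free {n : ℕ} {occ : Finset ℕ} {a : ℕ} (h : a ∉ occ) (b : Bool) :
    naplesStep n 1 occ a b = some a := by
  simp [naplesStep, h]

lemma naplesStep_fwd {n : ℕ} {occ : Finset ℕ} {a : ℕ} (h : a ∈ occ) :
    naplesStep n 1 occ a false = firstFree occ (List.range' (a+1) (n-a)) := by
  simp [naplesStep, h]

lemma backList {a : ℕ} (h : 2 ≤ a) :
    (List.range' (max (a - 1) 1) (min 1 (a - 1))).reverse = [a-1] := by
  have h1 : max (a-1) 1 = a - 1 := by omega
  have h2 : min 1 (a-1) = 1 := by omega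
  rw [h1, h2]
  rfl

lemma naplesStep_back_free {n : ℕ} {occ : Finset ℕ} {a : ℕ} (h2 : 2 ≤ a)
    (ha : a ∈ occ) (hf : a - 1 ∉ occ) :
    naplesStep n 1 occ a true = some (a-1) := by
  simp [naplesStep, ha, backList h2, firstFree, hf]

lemma naplesStep_back_blocked {n : ℕ} {occ : Finset ℕ} {a : ℕ}
    (ha : a ∈ occ) (h : a = 1 ∨ a - 1 ∈ occ) :
    naplesStep n 1 occ a true = naplesStep n 1 occ a false := by
  rcases Nat.lt_or_ge a 2 with h' | h'
  · interval_cases a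
    · simp only [naplesStep,
        show (List.range' (max (0 - 1) 1) (min 1 (0 - 1))).reverse = ([] : List ℕ) from rfl]
      rfl
    · simp only [naplesStep,
        show (List.range' (max (1 - 1) 1) (min 1 (1 - 1))).reverse = ([] : List ℕ) from rfl]
      rfl
  · have h3 : a - 1 ∈ occ := by
      rcases h with h | h
      · omega
      · exact h
    simp [naplesStep, ha, backList h', firstFree, h3]

lemma firstFree_Icc {l r n : ℕ} : ∀ d a, l ≤ a → a + d = r → r ≤ n →
    firstFree (Finset.Icc l r) (List.range' (a+1) (n-a)) =
      if r < n then some (r+1) else none := by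
  intro d
  induction d with
  | zero =>
    intro a h1 h2 h3
    have hr : a = r := by omega
    subst hr
    by_cases h : a < n
    · have hna : n - a = (n - (a+1)) + 1 := by omega
      rw [hna, List.range'_succ, if_pos h]
      unfold firstFree
      rw [List.find?_cons_of_pos]
      simp [Finset.mem_Icc]
    · have hna : n - a = 0 := by omega
      rw [hna, if_neg (by omega)]
      rfl
  | succ d ih =>
    intro a h1 h2 h3
    have han : a < n := by omega
    have : n - a = (n - (a+1)) + 1 := by omega
    rw [this, List.range'_succ]
    unfold firstFree
    rw [List.find?_cons_of_neg]
    · exact ih (a+1) (by omega) (by omega) h3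
    · simp [Finset.mem_Icc]; omega

lemma insert_Icc_left {l r : ℕ} (h1 : 1 ≤ l) (h : l ≤ r + 1) :
    insert (l-1) (Finset.Icc l r) = Finset.Icc (l-1) r := by
  ext x; simp [Finset.mem_Icc]; omega

lemma insert_Icc_right {l r : ℕ} (h : l ≤ r + 1) :
    insert (r+1) (Finset.Icc l r) = Finset.Icc l (r+1) := by
  ext x; simp [Finset.mem_Icc]; omega

lemma insert_empty_Icc (a : ℕ) : insert a (∅ : Finset ℕ) = Finset.Icc a a := by
  ext x; simp

/-- Count of successful coin lists. -/
def S (n : ℕ) : List ℕ → Finset ℕ → ℕ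
  | [], _ => 1
  | a :: as, occ =>
    (match naplesStep n 1 occ a true with
     | none => 0
     | some s => S n as (insert s occ)) +
    (match naplesStep n 1 occ a false with
     | none => 0
     | some s => S n as (insert s occ))

/-- Count of successful all-relevant coin lists. -/
def R (n : ℕ) : List ℕ → Finset ℕ → ℕ
  | [], _ => 1
  | a :: as, occ =>
    if a ∈ occ ∧ 2 ≤ a ∧ a - 1 ∉ occ then
      (match naplesStep n 1 occ a true with
       | none => 0
       | some s => R n as (insert s occ)) +
      (match naplesStep n 1 occ a false with
       | none => 0
       | some s => R n as (insert s occ))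
    else 0

/-- staircase tail list -/
def tl : ℕ → ℕ → List ℕ
  | 0, _ => []
  | (m+1), X => (2 + pc X) :: tl m (X / 2)

lemma S_nil (n : ℕ) (occ : Finset ℕ) : S n [] occ = 1 := rfl

lemma S_cons (n a : ℕ) (as : List ℕ) (occ : Finset ℕ) :
    S n (a :: as) occ =
    (match naplesStep n 1 occ a true with
     | none => 0
     | some s => S n as (insert s occ)) +
    (match naplesStep n 1 occ a false with
     | none => 0
     | some s => S n as (insert s occ)) := rfl

lemma R_cons (n a : ℕ) (as : List ℕ) (occ : Finset ℕ) :
    R n (a :: as) occ =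
    (if a ∈ occ ∧ 2 ≤ a ∧ a - 1 ∉ occ then
      (match naplesStep n 1 occ a true with
       | none => 0
       | some s => R n as (insert s occ)) +
      (match naplesStep n 1 occ a false with
       | none => 0
       | some s => R n as (insert s occ))
    else 0) := rfl

lemma S_mod_two (n : ℕ) (as : List ℕ) : ∀ occ : Finset ℕ,
    S n as occ % 2 = R n as occ % 2 := by
  induction as with
  | nil => intro occ; rfl
  | cons a as ih =>
    intro occ
    rw [S_cons, R_cons]
    by_cases hg : a ∈ occ ∧ 2 ≤ a ∧ a - 1 ∉ occ
    · rw [if_pos hg]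
      rcases h1 : naplesStep n 1 occ a true with _ | s1 <;>
        rcases h2 : naplesStep n 1 occ a false with _ | s2
      · rfl
      · have := ih (insert s2 occ)
        show (0 + S n as (insert s2 occ)) % 2 = (0 + R n as (insert s2 occ)) % 2
        omega
      · have := ih (insert s1 occ)
        show (S n as (insert s1 occ) + 0) % 2 = (R n as (insert s1 occ) + 0) % 2
        omega
      · have h3 := ih (insert s1 occ)
        have h4 := ih (insert s2 occ)
        show (S n as (insert s1 occ) + S n as (insert s2 occ)) % 2
          = (R n as (insert s1 occ) + R n as (insert s2 occ)) % 2
        omega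
    · rw [if_neg hg]
      have heq : naplesStep n 1 occ a true = naplesStep n 1 occ a false := by
        by_cases ha : a ∈ occ
        · refine naplesStep_back_blocked ha ?_
          rcases Nat.lt_or_ge a 2 with h' | h'
          · by_cases ha1 : a - 1 ∈ occ
            · exact Or.inr ha1
            · interval_cases a
              · exact Or.inr (by simpa using ha)
              · exact Or.inl rfl
          · exact Or.inr (by tauto)
        · rw [naplesStep_free ha, naplesStep_free ha]
      rw [heq]
      rcases h2 : naplesStep n 1 occ a false with _ | s2
      · rfl
      · show (S n as (insert s2 occ) + S n as (insert s2 occ)) % 2 = 0 % 2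
        omega

lemma S_cons_ss {n a s1 s2 : ℕ} {as : List ℕ} {occ : Finset ℕ}
    (h1 : naplesStep n 1 occ a true = some s1)
    (h2 : naplesStep n 1 occ a false = some s2) :
    S n (a :: as) occ = S n as (insert s1 occ) + S n as (insert s2 occ) := by
  rw [S_cons, h1, h2]

lemma S_cons_sn {n a s1 : ℕ} {as : List ℕ} {occ : Finset ℕ}
    (h1 : naplesStep n 1 occ a true = some s1)
    (h2 : naplesStep n 1 occ a false = none) :
    S n (a :: as) occ = S n as (insert s1 occ) := by
  rw [S_cons, h1, h2]
  show S n as (insert s1 occ) + 0 = S n as (insert s1 occ)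
  omega

lemma two_pow_pred {m : ℕ} (h : 1 ≤ m) : 2 ^ m = 2 * 2 ^ (m - 1) := by
  cases m with
  | zero => omega
  | succ k => simp [pow_succ, Nat.mul_comm]

lemma ML (n : ℕ) : ∀ m X ε l r, 1 ≤ m → m < n → X < 2^(m-1) → ε ≤ 2 →
    l + ε = 3 + pc X → r + m = l + n - 1 → r ≤ n →
    S n (tl m X) (Finset.Icc l r) + 2*X + 2 = 2^m + ε := by
  intro m
  induction m with
  | zero => intro X ε l r h1; omega
  | succ m ih =>
    intro X ε l r h1 h2 h3 h4 h5 h6 h7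
    have hn2 : 2 ≤ n := by omega
    rcases Nat.eq_zero_or_pos m with hm | hm
    · -- base case : m + 1 = 1
      subst hm
      have hX : X = 0 := by simpa using h3
      subst hX
      have hpc0 : pc 0 = 0 := by simp [pc]
      have htl : tl 1 0 = [2] := by simp [tl, pc]
      rw [htl]
      -- l + ε = 3, r = l + n - 2 ≤ n, so l ≤ 2
      have hl2 : l ≤ 2 := by omega
      have hl : l = 1 ∨ l = 2 := by omega
      rcases hl with hl | hl
      · -- l = 1, ε = 2, r = n - 1
        subst hl
        have hε : ε = 2 := by omega
        have hr : r = n - 1 := by omega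
        subst hr
        rcases Nat.lt_or_ge n 3 with hn3 | hn3
        · -- n = 2 : occ = {1}, a = 2 free
          have hn : n = 2 := by omega
          subst hn
          have hfree : (2:ℕ) ∉ Finset.Icc 1 (2-1) := by decide
          rw [S_cons_ss (naplesStep_free hfree true) (naplesStep_free hfree false)]
          simp [S_nil, hε]
        · -- n ≥ 3 : a = 2 ∈ Icc 1 (n-1), back blocked, fwd to n
          have hmem : (2:ℕ) ∈ Finset.Icc 1 (n-1) := by
            simp [Finset.mem_Icc]; omega
          have hfwd : naplesStep n 1 (Finset.Icc 1 (n-1)) 2 false = some n := by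
            rw [naplesStep_fwd hmem]
            have := firstFree_Icc (l := 1) (r := n-1) (n := n) (n-1-2) 2
              (by omega) (by omega) (by omega)
            rw [this, if_pos (by omega)]
            congr 1
            omega
          have hback := naplesStep_back_blocked (n := n) hmem
            (Or.inr (by simp [Finset.mem_Icc]; omega))
          rw [S_cons_ss (hback.trans hfwd) hfwd]
          simp [S_nil, hε]
      · -- l = 2, ε = 1, r = n
        subst hl
        have hε : ε = 1 := by omega
        have hr : r = n := by omega
        have hmem : (2:ℕ) ∈ Finset.Icc 2 r := by simp [Finset.mem_Icc]; omega
        have hnm : (1:ℕ) ∉ Finset.Icc 2 r := by simp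
        have hfwd : naplesStep n 1 (Finset.Icc 2 r) 2 false = none := by
          rw [naplesStep_fwd hmem]
          have := firstFree_Icc (l := 2) (r := r) (n := n) (r-2) 2
            (le_refl 2) (by omega) (by omega)
          rw [this, if_neg (by omega)]
        rw [S_cons_sn (naplesStep_back_free (by omega) hmem hnm) hfwd]
        simp [S_nil, hε]
    · -- inductive step : m ≥ 1
      have hpcX : pc X ≤ m := pc_le (by
        have := two_pow_pred (m := m + 1) (by omega)
        simpa using h3)
      have hXlt : X < 2 ^ m := by simpa using h3
      have hrec := pc_rec X
      have hX2 : X / 2 < 2 ^ (m - 1) := by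
        have := two_pow_pred hm
        omega
      have hpow : 2 ^ (m+1) = 2 * 2 ^ m := two_pow_pred (by omega)
      set a := 2 + pc X with ha
      have htl : tl (m+1) X = a :: tl m (X / 2) := rfl
      rw [htl]
      have hlr : l ≤ r := by omega
      -- note n ≥ m + 2 from h2
      interval_cases ε
      · -- ε = 0 : a = l - 1 ∉ occ
        have hal : a + 1 = l := by omega
        have hfree : a ∉ Finset.Icc l r := by simp [Finset.mem_Icc]; omega
        rw [S_cons_ss (naplesStep_free hfree true) (naplesStep_free hfree false)]
        have hins : insert a (Finset.Icc l r) = Finset.Icc (l-1) r := by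
          have := insert_Icc_left (l := l) (r := r) (by omega) (by omega)
          rw [← this]
          congr 1
          omega
        rw [hins]
        have hIH := ih (X/2) (1 - X % 2) (l-1) r hm (by omega) hX2 (by omega)
          (by omega) (by omega) h7
        omega
      · -- ε = 1 : a = l
        have hal : a = l := by omega
        have hmem : a ∈ Finset.Icc l r := by simp [Finset.mem_Icc]; omega
        have hnm : a - 1 ∉ Finset.Icc l r := by simp [Finset.mem_Icc]; omega
        have hback : naplesStep n 1 (Finset.Icc l r) a true = some (l-1) := by
          have := naplesStep_back_free (n := n) (by omega) hmem hnm
          rw [this]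
          congr 1
          omega
        have hinsb : insert (l-1) (Finset.Icc l r) = Finset.Icc (l-1) r :=
          insert_Icc_left (by omega) (by omega)
        have hIHb := ih (X/2) (2 - X % 2) (l-1) r hm (by omega) hX2 (by omega)
          (by omega) (by omega) h7
        have hff := firstFree_Icc (l := l) (r := r) (n := n) (r - a) a
          (by omega) (by omega) h7
        rcases Nat.lt_or_ge r n with hrn | hrn
        · -- r < n : forward parks at r+1
          have hfwd : naplesStep n 1 (Finset.Icc l r) a false = some (r+1) := by
            rw [naplesStep_fwd hmem, hff, if_pos hrn]
          rw [S_cons_ss hback hfwd, hinsb, insert_Icc_right (by omega)]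
          have hIHf := ih (X/2) (1 - X % 2) l (r+1) hm (by omega) hX2 (by omega)
            (by omega) (by omega) (by omega)
          omega
        · -- r = n : forward fails; then pc X = m and X = 2^m - 1
          have hrn' : r = n := by omega
          have hfwd : naplesStep n 1 (Finset.Icc l r) a false = none := by
            rw [naplesStep_fwd hmem, hff, if_neg (by omega)]
          rw [S_cons_sn hback hfwd, hinsb]
          have hpcm : pc X = m := by omega
          have hXval : X = 2^m - 1 := pc_max hXlt hpcm
          have h2m := two_pow_pred hm
          omega
      · -- ε = 2 : a = l + 1
        have hal : a = l + 1 := by omega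
        have harn : a ≤ r + 1 := by omega
        have hrn : r < n := by
          by_contra hcon
          have : pc X = m + 1 := by omega
          omega
        have hins : insert (r+1) (Finset.Icc l r) = Finset.Icc l (r+1) :=
          insert_Icc_right (by omega)
        have hIH := ih (X/2) (2 - X % 2) l (r+1) hm (by omega) hX2 (by omega)
          (by omega) (by omega) (by omega)
        rcases Nat.lt_or_ge r a with hra | hra
        · -- a = r + 1 ∉ occ
          have har : a = r + 1 := by omega
          have hfree : a ∉ Finset.Icc l r := by simp [Finset.mem_Icc]; omega
          rw [S_cons_ss (naplesStep_free hfree true) (naplesStep_free hfree false)]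
          rw [har, hins]
          omega
        · -- a ≤ r : a ∈ occ, back blocked, forward to r+1
          have hmem : a ∈ Finset.Icc l r := by simp [Finset.mem_Icc]; omega
          have hfwd : naplesStep n 1 (Finset.Icc l r) a false = some (r+1) := by
            rw [naplesStep_fwd hmem]
            have := firstFree_Icc (l := l) (r := r) (n := n) (r - a) a
              (by omega) (by omega) h7
            rw [this, if_pos hrn]
          have hback := naplesStep_back_blocked (n := n) hmem
            (Or.inr (by simp [Finset.mem_Icc]; omega))
          rw [S_cons_ss (hback.trans hfwd) hfwd, hins]
          omega

lemma R_cons_ss {n a s1 s2 : ℕ} {as : List ℕ} {occ : Finset ℕ}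
    (hg : a ∈ occ ∧ 2 ≤ a ∧ a - 1 ∉ occ)
    (h1 : naplesStep n 1 occ a true = some s1)
    (h2 : naplesStep n 1 occ a false = some s2) :
    R n (a :: as) occ = R n as (insert s1 occ) + R n as (insert s2 occ) := by
  rw [R_cons, if_pos hg, h1, h2]

lemma R_cons_sn {n a s1 : ℕ} {as : List ℕ} {occ : Finset ℕ}
    (hg : a ∈ occ ∧ 2 ≤ a ∧ a - 1 ∉ occ)
    (h1 : naplesStep n 1 occ a true = some s1)
    (h2 : naplesStep n 1 occ a false = none) :
    R n (a :: as) occ = R n as (insert s1 occ) := by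
  rw [R_cons, if_pos hg, h1, h2]
  show R n as (insert s1 occ) + 0 = R n as (insert s1 occ)
  omega

lemma RL (n : ℕ) : ∀ (as : List ℕ) (l r : ℕ), 1 ≤ l → r + as.length = l + n - 1 →
    r ≤ n → R n as (Finset.Icc l r) % 2 = 1 →
    ∃ X, as = tl as.length X ∧ (as ≠ [] → l = 2 + pc X ∧ X < 2^(as.length - 1)) := by
  intro as
  induction as with
  | nil =>
    intro l r _ _ _ _
    exact ⟨0, rfl, by simp⟩
  | cons a as ih =>
    intro l r hl hrel hr hodd
    by_cases hg : a ∈ Finset.Icc l r ∧ 2 ≤ a ∧ a - 1 ∉ Finset.Icc l r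
    · have hal : a = l := by
        have h1 := hg.1
        have h2 := hg.2.2
        simp [Finset.mem_Icc] at h1 h2
        omega
      have hl2 : 2 ≤ l := by omega
      have halr : a ≤ r := by
        have := hg.1; simp [Finset.mem_Icc] at this; omega
      have hback : naplesStep n 1 (Finset.Icc l r) a true = some (l-1) := by
        have := naplesStep_back_free (n := n) hg.2.1 hg.1 hg.2.2
        rw [this]; congr 1; omega
      have hinsb : insert (l-1) (Finset.Icc l r) = Finset.Icc (l-1) r :=
        insert_Icc_left (by omega) (by omega)
      have hff := firstFree_Icc (l := l) (r := r) (n := n) (r - a) a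
        (by omega) (by omega) hr
      rcases Nat.lt_or_ge r n with hrn | hrn
      · -- r < n : both branches present
        have hfwd : naplesStep n 1 (Finset.Icc l r) a false = some (r+1) := by
          rw [naplesStep_fwd hg.1, hff, if_pos hrn]
        rw [R_cons_ss hg hback hfwd, hinsb, insert_Icc_right (by omega)] at hodd
        rcases as with _ | ⟨b, as'⟩
        · -- as = [] : both terms are 1, sum even, contradiction
          simp [R] at hodd
        · -- as nonempty
          have hne : (b :: as') ≠ [] := by simp
          have hlen : (b :: as').length ≥ 1 := by simp
          rcases Nat.mod_two_eq_zero_or_one (R n (b :: as') (Finset.Icc (l-1) r)) with hb | hb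
          · -- forward branch odd
            have hf : R n (b :: as') (Finset.Icc l (r+1)) % 2 = 1 := by
              show (R n (b :: as') (Finset.Icc l (r+1))) % 2 = 1
              omega
            obtain ⟨X', hX1, hX2⟩ := ih l (r+1) hl (by simp at hrel ⊢; omega) (by omega) hf
            obtain ⟨hX2a, hX2b⟩ := hX2 hne
            refine ⟨2 * X', ?_, ?_⟩
            · have hdiv : (2 * X') / 2 = X' := by omega
              have hpc : pc (2 * X') = pc X' := by
                rw [pc_rec]
                have : (2 * X') % 2 = 0 := by omega
                rw [this, hdiv]
                omega
              show a :: (b :: as') = (2 + pc (2 * X')) :: tl (b :: as').length ((2 * X') / 2)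
              rw [hpc, hdiv, ← hX2a, ← hal, ← hX1]
            · intro _
              constructor
              · rw [pc_rec]
                have h0 : (2 * X') % 2 = 0 := by omega
                have hdiv : (2 * X') / 2 = X' := by omega
                rw [h0, hdiv]; omega
              · have hp := two_pow_pred (m := (b :: as').length) (by simp)
                simp at hX2b hp ⊢
                omega
          · -- back branch odd
            obtain ⟨X', hX1, hX2⟩ := ih (l-1) r (by omega) (by simp at hrel ⊢; omega) hr hb
            obtain ⟨hX2a, hX2b⟩ := hX2 hne
            refine ⟨2 * X' + 1, ?_, ?_⟩
            · have hdiv : (2 * X' + 1) / 2 = X' := by omega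
              have hpc : pc (2 * X' + 1) = pc X' + 1 := by
                rw [pc_rec]
                have : (2 * X' + 1) % 2 = 1 := by omega
                rw [this, hdiv]; omega
              show a :: (b :: as') = (2 + pc (2 * X' + 1)) :: tl (b :: as').length ((2 * X' + 1) / 2)
              rw [hpc, hdiv, ← hX1]
              congr 1
              omega
            · intro _
              constructor
              · rw [pc_rec]
                have h0 : (2 * X' + 1) % 2 = 1 := by omega
                have hdiv : (2 * X' + 1) / 2 = X' := by omega
                rw [h0, hdiv]; omega
              · have hp := two_pow_pred (m := (b :: as').length) (by simp)
                simp at hX2b hp ⊢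
                omega
      · -- r = n : forward fails
        have hrn' : r = n := by omega
        have hfwd : naplesStep n 1 (Finset.Icc l r) a false = none := by
          rw [naplesStep_fwd hg.1, hff, if_neg (by omega)]
        rw [R_cons_sn hg hback hfwd, hinsb] at hodd
        have hodd' : R n as (Finset.Icc (l-1) r) % 2 = 1 := by
          show R n as (Finset.Icc (l-1) r) % 2 = 1
          omega
        rcases as with _ | ⟨b, as'⟩
        · -- as = [] : length 1, l = 2 from capacity
          have hl2' : l = 2 := by simp at hrel; omega
          refine ⟨0, ?_, ?_⟩
          · show [a] = (2 + pc 0) :: tl 0 (0/2)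
            simp [tl, pc]
            omega
          · intro _
            constructor
            · simp [pc]; omega
            · simp
        · have hne : (b :: as') ≠ [] := by simp
          obtain ⟨X', hX1, hX2⟩ := ih (l-1) r (by omega) (by simp at hrel ⊢; omega) hr hodd'
          obtain ⟨hX2a, hX2b⟩ := hX2 hne
          refine ⟨2 * X' + 1, ?_, ?_⟩
          · have hdiv : (2 * X' + 1) / 2 = X' := by omega
            have hpc : pc (2 * X' + 1) = pc X' + 1 := by
              rw [pc_rec]
              have : (2 * X' + 1) % 2 = 1 := by omega
              rw [this, hdiv]; omega
            show a :: (b :: as') = (2 + pc (2 * X' + 1)) :: tl (b :: as').length ((2 * X' + 1) / 2)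
            rw [hpc, hdiv, ← hX1]
            congr 1
            omega
          · intro _
            constructor
            · rw [pc_rec]
              have h0 : (2 * X' + 1) % 2 = 1 := by omega
              have hdiv : (2 * X' + 1) / 2 = X' := by omega
              rw [h0, hdiv]; omega
            · have hp := two_pow_pred (m := (b :: as').length) (by simp)
              simp at hX2b hp ⊢
              omega
    · rw [R_cons, if_neg hg] at hodd
      omega

lemma runPark_cons (st : Finset ℕ → ℕ → Bool → Option ℕ) (a : ℕ) (b : Bool)
    (rest : List (ℕ × Bool)) (occ : Finset ℕ) :
    runPark st ((a, b) :: rest) occ =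
    (match st occ a b with
     | none => false
     | some s => runPark st rest (insert s occ)) := rfl

lemma sum_ind (n : ℕ) : ∀ (m : ℕ) (f : Fin m → ℕ) (occ : Finset ℕ),
    (∑ b : Fin m → Bool,
      if runPark (naplesStep n 1) (List.ofFn fun i => (f i, b i)) occ then (1:ℝ) else 0)
      = (S n (List.ofFn f) occ : ℝ) := by
  intro m
  induction m with
  | zero =>
    intro f occ
    have h0 : ∀ b : Fin 0 → Bool,
        (if runPark (naplesStep n 1) (List.ofFn fun i => (f i, b i)) occ then (1:ℝ) else 0) = 1 := by
      intro b
      rw [List.ofFn_zero]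
      rfl
    rw [Finset.sum_congr rfl (fun b _ => h0 b), Finset.sum_const]
    simp [S_nil, List.ofFn_zero]
  | succ m ih =>
    intro f occ
    let e : (Bool × (Fin m → Bool)) ≃ (Fin (m+1) → Bool) :=
      Fin.consEquiv (fun _ => Bool)
    rw [← Equiv.sum_comp e, Fintype.sum_prod_type, Fintype.sum_bool]
    have he : ∀ (b0 : Bool) (b' : Fin m → Bool), e (b0, b') = Fin.cons b0 b' := by
      intro b0 b'
      rfl
    have hlist : ∀ (b0 : Bool) (b' : Fin m → Bool),
        (List.ofFn fun i : Fin (m+1) => (f i, e (b0, b') i)) =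
        (f 0, b0) :: (List.ofFn fun i : Fin m => (f i.succ, b' i)) := by
      intro b0 b'
      rw [List.ofFn_succ]
      simp [he, Fin.cons_zero, Fin.cons_succ]
    have key : ∀ b0 : Bool,
        (∑ b' : Fin m → Bool,
          if runPark (naplesStep n 1) (List.ofFn fun i : Fin (m+1) => (f i, e (b0, b') i)) occ
          then (1:ℝ) else 0) =
        ((match naplesStep n 1 occ (f 0) b0 with
          | none => 0
          | some s => S n (List.ofFn fun i : Fin m => f i.succ) (insert s occ) : ℕ) : ℝ) := by
      intro b0
      rcases hst : naplesStep n 1 occ (f 0) b0 with _ | s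
      · have hz : ∀ b' : Fin m → Bool,
            (if runPark (naplesStep n 1)
              (List.ofFn fun i : Fin (m+1) => (f i, e (b0, b') i)) occ then (1:ℝ) else 0) = 0 := by
          intro b'
          rw [hlist b0 b', runPark_cons, hst]
          simp
        rw [Finset.sum_congr rfl (fun b' _ => hz b')]
        simp
      · have hz : ∀ b' : Fin m → Bool,
            (if runPark (naplesStep n 1)
              (List.ofFn fun i : Fin (m+1) => (f i, e (b0, b') i)) occ then (1:ℝ) else 0) =
            (if runPark (naplesStep n 1)
              (List.ofFn fun i : Fin m => (f i.succ, b' i)) (insert s occ) then (1:ℝ) else 0) := by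
          intro b'
          rw [hlist b0 b', runPark_cons, hst]
        rw [Finset.sum_congr rfl (fun b' _ => hz b')]
        exact ih (fun i => f i.succ) (insert s occ)
    rw [key true, key false, List.ofFn_succ, S_cons]
    rcases h1 : naplesStep n 1 occ (f 0) true with _ | s1 <;>
      rcases h2 : naplesStep n 1 occ (f 0) false with _ | s2 <;>
      · show _ = ((_ : ℕ) : ℝ)
        push_cast
        simp [Function.comp]
        try ring

lemma prob_eq (n : ℕ) (f : Fin n → ℕ) :
    probNaples n 1 (1/2) f = (S n (List.ofFn f) ∅ : ℝ) / 2^n := by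
  unfold probNaples
  have hw : ∀ b : Fin n → Bool,
      (∏ i, if b i then (1:ℝ)/2 else 1 - 1/2) = (1/2)^n := by
    intro b
    rw [Finset.prod_congr rfl (fun i _ => show (if b i then (1:ℝ)/2 else 1 - 1/2) = 1/2 by
      split <;> norm_num)]
    simp
  calc ∑ b : Fin n → Bool, (∏ i, if b i then (1:ℝ)/2 else 1 - 1/2) *
          (if parksNaples n 1 f b then 1 else 0)
      = ∑ b : Fin n → Bool, (1/2)^n * (if parksNaples n 1 f b then 1 else 0) := by
        refine Finset.sum_congr rfl fun b _ => ?_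
        rw [hw b]
    _ = (1/2)^n * ∑ b : Fin n → Bool, (if parksNaples n 1 f b then (1:ℝ) else 0) := by
        rw [Finset.mul_sum]
    _ = (1/2)^n * (S n (List.ofFn f) ∅ : ℝ) := by
        rw [← sum_ind n n f ∅]
        rfl
    _ = (S n (List.ofFn f) ∅ : ℝ) / 2^n := by
        rw [div_pow]
        ring

lemma tl_ofFn : ∀ (m X : ℕ), tl m X = List.ofFn (fun j : Fin m => 2 + pc (X >>> j.1)) := by
  intro m
  induction m with
  | zero => intro X; rfl
  | succ m ih =>
    intro X
    rw [List.ofFn_succ]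
    have hsh : ∀ k : ℕ, X >>> (k+1) = (X/2) >>> k := by
      intro k
      rw [add_comm, Nat.shiftRight_add, Nat.shiftRight_one]
    show (2 + pc X) :: tl m (X/2) = _
    rw [ih (X/2)]
    have hfun : (fun j : Fin m => 2 + pc ((X/2) >>> j.1)) =
        (fun j : Fin m => 2 + pc (X >>> ((fun i : Fin (m+1) => i) j.succ).1)) := by
      funext j
      show 2 + pc ((X/2) >>> j.1) = 2 + pc (X >>> (j.1 + 1))
      rw [hsh j.1]
    rw [hfun]
    rfl

lemma S_first {k : ℕ} (g : Fin (k+2) → ℕ) :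
    S (k+2) (List.ofFn g) ∅ =
    2 * S (k+2) (List.ofFn (fun i : Fin (k+1) => g i.succ)) (Finset.Icc (g 0) (g 0)) := by
  rw [List.ofFn_succ]
  have hfree : g 0 ∉ (∅ : Finset ℕ) := by simp
  rw [S_cons_ss (naplesStep_free hfree true) (naplesStep_free hfree false)]
  rw [insert_empty_Icc]
  omega

/-- For each `1 ≤ t ≤ 2^(n-2)` there is exactly one `α ∈ {1,…,n}ⁿ` parking with
probability `(2t-1)/2^(n-1)` in the random 1-Naples model with `p = 1/2`. -/
theorem stmt11 (n : ℕ) (hn : 2 ≤ n) (t : ℕ) (ht1 : 1 ≤ t) (ht2 : t ≤ 2 ^ (n - 2)) :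
    ∃! α : Fin n → Fin n,
      probNaples n 1 (1/2) (fun i => (α i).1 + 1) = (2 * (t : ℝ) - 1) / 2 ^ (n - 1) := by
  obtain ⟨k, rfl⟩ : ∃ k, n = k + 2 := ⟨n - 2, by omega⟩
  simp only [show k + 2 - 1 = k + 1 from rfl, show k + 2 - 2 = k from rfl] at *
  set D : ℕ := 2^k - t with hD
  have hDlt : D < 2^k := by omega
  have hpcD : pc D ≤ k := pc_le hDlt
  have hbound : ∀ j : ℕ, 1 + pc (D >>> j) < k + 2 := by
    intro j
    have h1 : pc (D >>> j) ≤ pc D := pc_shiftRight_le D j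
    omega
  set αt : Fin (k+2) → Fin (k+2) := fun i => ⟨1 + pc (D >>> (i.1 - 1)), hbound _⟩ with hαt
  have hpow1 : (2:ℕ)^(k+1) = 2 * 2^k := by rw [pow_succ]; ring
  -- the full preference list of αt
  have hlist : (List.ofFn fun i : Fin (k+2) => (αt i).1 + 1) = (2 + pc D) :: tl (k+1) D := by
    rw [List.ofFn_succ, tl_ofFn]
    congr 1
    · show 1 + pc (D >>> ((0 : Fin (k+2)).1 - 1)) + 1 = 2 + pc D
      rw [show ((0 : Fin (k+2)).1 - 1) = 0 from rfl, Nat.shiftRight_zero]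
      omega
    · congr 1
      funext j
      show 1 + pc (D >>> ((j.succ.1) - 1)) + 1 = 2 + pc (D >>> j.1)
      have h : j.succ.1 - 1 = j.1 := rfl
      rw [h]
      omega
  -- counting lemma applied to the tail
  have hML : ∀ (a' : ℕ) (X : ℕ), X < 2^k → a' = 2 + pc X →
      S (k+2) (tl (k+1) X) (Finset.Icc a' a') + 2*X + 2 = 2^(k+1) + 1 := by
    intro a' X hX ha'
    have hpcX : pc X ≤ k := pc_le hX
    exact ML (k+2) (k+1) X 1 a' a' (by omega) (by omega) (by simpa using hX) (by omega)
      (by omega) (by omega) (by omega)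
  -- value of S for αt
  have hSfull : S (k+2) (List.ofFn fun i : Fin (k+2) => (αt i).1 + 1) ∅ = 2 * (2 * t - 1) := by
    have h0 : (αt 0).1 + 1 = 2 + pc D := by
      show 1 + pc (D >>> ((0 : Fin (k+2)).1 - 1)) + 1 = 2 + pc D
      rw [show ((0 : Fin (k+2)).1 - 1) = 0 from rfl, Nat.shiftRight_zero]
      omega
    rw [S_first]
    have htail : (List.ofFn (fun i : Fin (k+1) => (αt i.succ).1 + 1))
        = tl (k+1) D := by
      have h := hlist
      rw [List.ofFn_succ] at h
      exact (List.cons.inj h).2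
    rw [htail, h0]
    have := hML (2 + pc D) D hDlt rfl
    omega
  have hprob : probNaples (k+2) 1 (1/2) (fun i => (αt i).1 + 1) =
      (2 * (t : ℝ) - 1) / 2 ^ (k + 1) := by
    rw [prob_eq, hSfull]
    have h1 : ((2 * (2 * t - 1) : ℕ) : ℝ) = 2 * (2 * (t:ℝ) - 1) := by
      push_cast [Nat.cast_sub (by omega : 1 ≤ 2 * t)]
      ring
    rw [h1]
    have h2 : (2:ℝ)^(k+2) = 2 * 2^(k+1) := by rw [pow_succ]; ring
    rw [h2]
    field_simp
  refine ⟨αt, hprob, ?_⟩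
  -- uniqueness
  intro α' hα'
  have hS' := prob_eq (k+2) (fun i => (α' i).1 + 1)
  rw [hα'] at hS'
  -- derive the value of S for α'
  have hpow2 : (2:ℝ)^(k+2) = 2 * 2^(k+1) := by rw [pow_succ]; ring
  have h3 : (2:ℝ)^(k+2) ≠ 0 := by positivity
  have h4 : (2:ℝ)^(k+1) ≠ 0 := by positivity
  replace hS' := hS'.symm
  rw [div_eq_div_iff h3 h4] at hS'
  have h5 : ((S (k+2) (List.ofFn fun i => (α' i).1 + 1) ∅ : ℕ) : ℝ) * 2^(k+1)
      = (2 * (2 * (t:ℝ) - 1)) * 2^(k+1) := by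
    rw [hS', hpow2]
    ring
  have h6 : ((S (k+2) (List.ofFn fun i => (α' i).1 + 1) ∅ : ℕ) : ℝ)
      = ((2 * (2 * t - 1) : ℕ) : ℝ) := by
    have := mul_right_cancel₀ h4 h5
    rw [this]
    push_cast [Nat.cast_sub (by omega : 1 ≤ 2 * t)]
    ring
  have hSval : S (k+2) (List.ofFn fun i => (α' i).1 + 1) ∅ = 2 * (2 * t - 1) :=
    Nat.cast_injective h6
  -- peel the first car
  rw [S_first] at hSval
  set a' : ℕ := (α' 0).1 + 1 with ha'
  set tail' : List ℕ := List.ofFn (fun i : Fin (k+1) => (α' i.succ).1 + 1) with htail'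
  have hStail : S (k+2) tail' (Finset.Icc a' a') = 2 * t - 1 := by omega
  have hodd : S (k+2) tail' (Finset.Icc a' a') % 2 = 1 := by omega
  rw [S_mod_two] at hodd
  have hlen : tail'.length = k + 1 := by simp [htail']
  obtain ⟨X, hX1, hX2⟩ := RL (k+2) tail' a' a' (by omega)
    (by rw [hlen]; omega) (by have := (α' 0).2; omega) hodd
  have hne : tail' ≠ [] := by
    intro hcon
    rw [hcon] at hlen
    simp at hlen
  obtain ⟨hX2a, hX2b⟩ := hX2 hne
  rw [hlen] at hX1 hX2b
  simp only [Nat.add_sub_cancel] at hX2b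
  -- X must equal D
  have hMLX := hML a' X hX2b hX2a
  rw [hX1] at hStail
  have hXD : X = D := by omega
  subst hXD
  -- conclude α' = αt
  have hfull' : (List.ofFn fun i : Fin (k+2) => (α' i).1 + 1) =
      (List.ofFn fun i : Fin (k+2) => (αt i).1 + 1) := by
    rw [hlist, List.ofFn_succ]
    congr 1
  have hfun : (fun i : Fin (k+2) => (α' i).1 + 1) = (fun i : Fin (k+2) => (αt i).1 + 1) := by
    rwa [List.ofFn_inj] at hfull'
  funext i
  have := congrFun hfun i
  exact Fin.ext (by omega)
end

section
/- The function g is injective on the set A of tuples α ∈ {1,...,n}^n satisfying α_1 = α_2, α_{i+1} ∈ {α_i − 1, α_i} for all i, and α_n = 2: distinct tuples in A have distinct values of g. -/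
namespace Sx

def cnt (n : ℕ) : List ℕ → Finset ℕ → ℕ
  | [], _ => 1
  | a :: as, occ =>
    (match naplesStep n 1 occ a false with
      | none => 0
      | some s => cnt n as (insert s occ)) +
    (match naplesStep n 1 occ a true with
      | none => 0
      | some s => cnt n as (insert s occ))

def E : List ℕ → ℕ
  | a :: b :: l => (if a = b then 1 else 0) + 2 * E (b :: l)
  | _ => 0

inductive Chn : ℕ → List ℕ → Prop
  | single : Chn 2 [2]
  | cons_eq {h l} : Chn h l → Chn h (h :: l)
  | cons_succ {h l} : Chn h l → Chn (h + 1) ((h + 1) :: l)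

lemma Chn.two_le {h l} (c : Chn h l) : 2 ≤ h := by
  induction c with
  | single => omega
  | cons_eq _ ih => omega
  | cons_succ _ ih => omega

lemma Chn.head {h l} (c : Chn h l) : ∃ t, l = h :: t := by
  cases c with
  | single => exact ⟨[], rfl⟩
  | cons_eq c => exact ⟨_, rfl⟩
  | cons_succ c => exact ⟨_, rfl⟩

lemma Chn.len {h l} (c : Chn h l) : h ≤ l.length + 1 := by
  induction c with
  | single => simp
  | cons_eq _ ih => simp at *; omega
  | cons_succ _ ih => simp at *; omega

lemma Chn.strict {h l} (c : Chn h l) (hl : l.length + 1 = h) : E l = 0 := by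
  induction c with
  | single => rfl
  | cons_eq c ih =>
    exfalso; have := c.len; simp at hl; omega
  | cons_succ c ih =>
    simp at hl
    obtain ⟨t, rfl⟩ := c.head
    show (if _ = _ then 1 else 0) + 2 * E _ = 0
    rw [ih (by simp at hl ⊢; omega)]
    simp

lemma insert_Icc_left {l r : ℕ} (h2 : 2 ≤ l) (hlr : l ≤ r) :
    insert (l - 1) (Finset.Icc l r) = Finset.Icc (l - 1) r := by
  ext x; simp [Finset.mem_Icc]; omega

lemma insert_Icc_right {l r : ℕ} (hlr : l ≤ r + 1) :
    insert (r + 1) (Finset.Icc l r) = Finset.Icc l (r + 1) := by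
  ext x; simp [Finset.mem_Icc]; omega

lemma ff {l r n h : ℕ} (h2 : l ≤ r) (h3 : r ≤ n) (h4 : l ≤ h + 1) (h5 : h ≤ r) :
    firstFree (Finset.Icc l r) (List.range' (h + 1) (n - h)) =
      if r < n then some (r + 1) else none := by
  have hsplit : List.range' (h + 1) (r - h) ++ List.range' (r + 1) (n - r) =
      List.range' (h + 1) (n - h) := by
    have := List.range'_append_1 (s := h + 1) (m := r - h) (n := n - r)
    rw [show h + 1 + (r - h) = r + 1 by omega] at this
    rw [show r - h + (n - r) = n - h by omega] at this
    exact this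
  rw [← hsplit, firstFree, List.find?_append]
  have h1 : (List.range' (h + 1) (r - h)).find? (fun s => decide (s ∉ Finset.Icc l r))
      = none := by
    rw [List.find?_eq_none]
    intro x hx
    rw [List.mem_range'] at hx
    obtain ⟨i, hi, rfl⟩ := hx
    simp [Finset.mem_Icc]
    omega
  rw [h1]
  by_cases hrn : r < n
  · rw [show n - r = (n - r - 1) + 1 by omega, List.range'_succ]
    rw [List.find?_cons_of_pos]
    · simp [hrn]
    · simp [Finset.mem_Icc]
  · rw [show n - r = 0 by omega]
    simp [hrn]


lemma step_free {n : ℕ} {occ : Finset ℕ} {a : ℕ} (b : Bool) (h : a ∉ occ) :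
    naplesStep n 1 occ a b = some a := by simp [naplesStep, h]

lemma step_fwd {n : ℕ} {occ : Finset ℕ} {a : ℕ} (hmem : a ∈ occ) :
    naplesStep n 1 occ a false = firstFree occ (List.range' (a + 1) (n - a)) := by
  simp [naplesStep, hmem]

lemma back_list {a : ℕ} (ha : 2 ≤ a) :
    (List.range' (max (a - 1) 1) (min 1 (a - 1))).reverse = [a - 1] := by
  rw [show min 1 (a - 1) = 1 by omega, show max (a - 1) 1 = a - 1 by omega]
  simp

lemma step_back_free {n : ℕ} {occ : Finset ℕ} {a : ℕ} (ha : 2 ≤ a) (hmem : a ∈ occ)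
    (hf : a - 1 ∉ occ) : naplesStep n 1 occ a true = some (a - 1) := by
  simp only [naplesStep, hmem, not_true_eq_false, if_false, if_true, back_list ha]
  simp [firstFree, List.find?, hf]

lemma step_back_occ {n : ℕ} {occ : Finset ℕ} {a : ℕ} (ha : 2 ≤ a) (hmem : a ∈ occ)
    (hf : a - 1 ∈ occ) :
    naplesStep n 1 occ a true = firstFree occ (List.range' (a + 1) (n - a)) := by
  simp only [naplesStep, hmem, not_true_eq_false, if_false, if_true, back_list ha]
  simp [firstFree, List.find?, hf]

lemma E_cons {a h : ℕ} {t : List ℕ} :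
    E (a :: h :: t) = (if a = h then 1 else 0) + 2 * E (h :: t) := rfl

lemma main {h : ℕ} {ch : List ℕ} (c : Chn h ch) :
    ∀ l r n : ℕ, 1 ≤ l → l ≤ r → r ≤ n → l ≤ h + 1 → h ≤ l + 1 → h ≤ r →
    ch.length + (r - l + 1) = n →
    cnt n ch (Finset.Icc l r) + l = h + 1 + 2 * E ch := by
  induction c with
  | single =>
    intro l r n h1 h2 h3 h4 h5 h6 hlen
    simp only [List.length_cons, List.length_nil] at hlen
    show (match naplesStep n 1 (Finset.Icc l r) 2 false with
      | none => 0 | some s => cnt n [] (insert s (Finset.Icc l r))) +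
      (match naplesStep n 1 (Finset.Icc l r) 2 true with
      | none => 0 | some s => cnt n [] (insert s (Finset.Icc l r))) + l = 2 + 1 + 2 * E [2]
    have hE : E [2] = 0 := rfl
    rcases (by omega : l = 1 ∨ l = 2) with rfl | rfl
    · have hmem : 2 ∈ Finset.Icc 1 r := by simp [Finset.mem_Icc]; omega
      have hmem1 : (2 : ℕ) - 1 ∈ Finset.Icc 1 r := by simp [Finset.mem_Icc]; omega
      rw [step_fwd hmem, step_back_occ (le_refl 2) hmem hmem1,
        ff h2 h3 (by omega) h6, if_pos (by omega)]
      simp [cnt, hE]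
    · have hmem : 2 ∈ Finset.Icc 2 r := by simp [Finset.mem_Icc]; omega
      have hmem1 : (2 : ℕ) - 1 ∉ Finset.Icc 2 r := by simp [Finset.mem_Icc]
      rw [step_fwd hmem, step_back_free (le_refl 2) hmem hmem1,
        ff h2 h3 (by omega) h6, if_neg (by omega)]
      simp [cnt, hE]
  | @cons_eq h rest c ih =>
    intro l r n h1 h2 h3 h4 h5 h6 hlen
    obtain ⟨t, rfl⟩ := c.head
    have hh2 : 2 ≤ h := c.two_le
    have hlen2 : h ≤ (h :: t).length + 1 := c.len
    simp only [List.length_cons] at hlen hlen2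
    rw [E_cons, if_pos rfl]
    show (match naplesStep n 1 (Finset.Icc l r) h false with
      | none => 0 | some s => cnt n (h :: t) (insert s (Finset.Icc l r))) +
      (match naplesStep n 1 (Finset.Icc l r) h true with
      | none => 0 | some s => cnt n (h :: t) (insert s (Finset.Icc l r))) + l
      = h + 1 + 2 * (1 + 2 * E (h :: t))
    rcases (by omega : h + 1 = l ∨ h = l ∨ h = l + 1) with hc | hc | hc
    · have hnm : h ∉ Finset.Icc l r := by simp [Finset.mem_Icc]; omega
      rw [step_free false hnm, step_free true hnm]
      dsimp only
      have e1 : insert h (Finset.Icc l r) = Finset.Icc (l - 1) r := by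
        rw [show h = l - 1 by omega]; exact insert_Icc_left (by omega) h2
      rw [e1]
      have i1 := ih (l - 1) r n (by omega) (by omega) h3 (by omega) (by omega) (by omega)
        (by simp only [List.length_cons]; omega)
      omega
    · subst hc
      have hrn : r < n := by omega
      have hmem : h ∈ Finset.Icc h r := by simp [Finset.mem_Icc]; omega
      have hnm1 : h - 1 ∉ Finset.Icc h r := by simp [Finset.mem_Icc]; omega
      rw [step_fwd hmem, step_back_free hh2 hmem hnm1,
        ff h2 h3 (by omega) h6, if_pos hrn]
      dsimp only
      have e1 : insert (h - 1) (Finset.Icc h r) = Finset.Icc (h - 1) r :=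
        insert_Icc_left (by omega) h2
      have e2 : insert (r + 1) (Finset.Icc h r) = Finset.Icc h (r + 1) :=
        insert_Icc_right (by omega)
      rw [e1, e2]
      have i1 := ih (h - 1) r n (by omega) (by omega) h3 (by omega) (by omega) h6
        (by simp only [List.length_cons]; omega)
      have i2 := ih h (r + 1) n h1 (by omega) (by omega) (by omega) (by omega) (by omega)
        (by simp only [List.length_cons]; omega)
      omega
    · have hrn : r < n := by omega
      have hmem : h ∈ Finset.Icc l r := by simp [Finset.mem_Icc]; omega
      have hm1 : h - 1 ∈ Finset.Icc l r := by simp [Finset.mem_Icc]; omega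
      rw [step_fwd hmem, step_back_occ hh2 hmem hm1,
        ff h2 h3 (by omega) h6, if_pos hrn]
      dsimp only
      have e2 : insert (r + 1) (Finset.Icc l r) = Finset.Icc l (r + 1) :=
        insert_Icc_right (by omega)
      rw [e2]
      have i2 := ih l (r + 1) n h1 (by omega) (by omega) (by omega) (by omega) (by omega)
        (by simp only [List.length_cons]; omega)
      omega
  | @cons_succ h rest c ih =>
    intro l r n h1 h2 h3 h4 h5 h6 hlen
    obtain ⟨t, rfl⟩ := c.head
    have hh2 : 2 ≤ h := c.two_le
    have hlen2 : h ≤ (h :: t).length + 1 := c.len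
    simp only [List.length_cons] at hlen hlen2
    rw [E_cons, if_neg (by omega)]
    show (match naplesStep n 1 (Finset.Icc l r) (h + 1) false with
      | none => 0 | some s => cnt n (h :: t) (insert s (Finset.Icc l r))) +
      (match naplesStep n 1 (Finset.Icc l r) (h + 1) true with
      | none => 0 | some s => cnt n (h :: t) (insert s (Finset.Icc l r))) + l
      = h + 1 + 1 + 2 * (0 + 2 * E (h :: t))
    rcases (by omega : h + 2 = l ∨ h + 1 = l ∨ h + 1 = l + 1) with hc | hc | hc
    · have hnm : h + 1 ∉ Finset.Icc l r := by simp [Finset.mem_Icc]; omega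
      rw [step_free false hnm, step_free true hnm]
      dsimp only
      have e1 : insert (h + 1) (Finset.Icc l r) = Finset.Icc (l - 1) r := by
        rw [show h + 1 = l - 1 by omega]; exact insert_Icc_left (by omega) h2
      rw [e1]
      have i1 := ih (l - 1) r n (by omega) (by omega) h3 (by omega) (by omega) (by omega)
        (by simp only [List.length_cons]; omega)
      omega
    · have hmem : h + 1 ∈ Finset.Icc l r := by simp [Finset.mem_Icc]; omega
      have hnm1 : h + 1 - 1 ∉ Finset.Icc l r := by simp [Finset.mem_Icc]; omega
      rw [step_fwd hmem, step_back_free (by omega) hmem hnm1,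
        ff h2 h3 (by omega) h6]
      dsimp only
      have e1 : insert (h + 1 - 1) (Finset.Icc l r) = Finset.Icc (l - 1) r := by
        rw [show h + 1 - 1 = l - 1 by omega]; exact insert_Icc_left (by omega) h2
      rw [e1]
      have i1 := ih (l - 1) r n (by omega) (by omega) h3 (by omega) (by omega)
        (by omega) (by simp only [List.length_cons]; omega)
      by_cases hrn : r < n
      · rw [if_pos hrn]
        dsimp only
        have e2 : insert (r + 1) (Finset.Icc l r) = Finset.Icc l (r + 1) :=
          insert_Icc_right (by omega)
        rw [e2]
        have i2 := ih l (r + 1) n h1 (by omega) (by omega) (by omega) (by omega)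
          (by omega) (by simp only [List.length_cons]; omega)
        omega
      · rw [if_neg hrn]
        dsimp only
        have hE0 : E (h :: t) = 0 := c.strict (by simp only [List.length_cons]; omega)
        omega
    · have hrn : r < n := by omega
      have hmem : h + 1 ∈ Finset.Icc l r := by simp [Finset.mem_Icc]; omega
      have hm1 : h + 1 - 1 ∈ Finset.Icc l r := by simp [Finset.mem_Icc]; omega
      rw [step_fwd hmem, step_back_occ (by omega) hmem hm1,
        ff h2 h3 (by omega) h6, if_pos hrn]
      dsimp only
      have e2 : insert (r + 1) (Finset.Icc l r) = Finset.Icc l (r + 1) :=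
        insert_Icc_right (by omega)
      rw [e2]
      have i2 := ih l (r + 1) n h1 (by omega) (by omega) (by omega) (by omega)
        (by omega) (by simp only [List.length_cons]; omega)
      omega

lemma inner_sum {n m : ℕ} (a0 : ℕ) (a' : Fin m → ℕ) (occ : Finset ℕ) (b : Bool)
    (IH : ∀ occ : Finset ℕ,
      (Finset.univ.filter fun β : Fin m → Bool =>
        runPark (naplesStep n 1) (List.ofFn fun i => (a' i, !(β i))) occ = true).card
        = cnt n (List.ofFn a') occ) :
    (∑ β' : Fin m → Bool,
      if runPark (naplesStep n 1)
          ((a0, b) :: List.ofFn fun i => (a' i, !(β' i))) occ = true then 1 else 0)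
    = match naplesStep n 1 occ a0 b with
      | none => 0
      | some s => cnt n (List.ofFn a') (insert s occ) := by
  rcases h1 : naplesStep n 1 occ a0 b with _ | s
  · have hz : ∀ β' : Fin m → Bool, runPark (naplesStep n 1)
        ((a0, b) :: List.ofFn fun i => (a' i, !(β' i))) occ = false := by
      intro β'; simp [runPark, h1]
    simp [hz]
  · have hz : ∀ β' : Fin m → Bool, runPark (naplesStep n 1)
        ((a0, b) :: List.ofFn fun i => (a' i, !(β' i))) occ =
        runPark (naplesStep n 1) (List.ofFn fun i => (a' i, !(β' i))) (insert s occ) := by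
      intro β'; simp [runPark, h1]
    simp only [hz]
    rw [← IH (insert s occ), Finset.card_filter]

lemma card_eq (n : ℕ) : ∀ (m : ℕ) (a : Fin m → ℕ) (occ : Finset ℕ),
    (Finset.univ.filter fun β : Fin m → Bool =>
      runPark (naplesStep n 1) (List.ofFn fun i => (a i, !(β i))) occ = true).card
      = cnt n (List.ofFn a) occ := by
  intro m
  induction m with
  | zero =>
    intro a occ
    simp [List.ofFn_zero, runPark, cnt]
  | succ m IH =>
    intro a occ
    rw [Finset.card_filter]
    rw [← Equiv.sum_comp (Fin.consEquiv (fun _ : Fin (m + 1) => Bool))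
      (fun β => if runPark (naplesStep n 1)
        (List.ofFn fun i => (a i, !(β i))) occ = true then (1 : ℕ) else 0)]
    rw [Fintype.sum_prod_type, Fintype.sum_bool]
    have hsplit : ∀ (b : Bool) (β' : Fin m → Bool),
        (List.ofFn fun i : Fin (m + 1) =>
          (a i, !((Fin.consEquiv (fun _ : Fin (m + 1) => Bool)) (b, β') i)))
        = (a 0, !b) :: List.ofFn fun i : Fin m => (a i.succ, !(β' i)) := by
      intro b β'
      rw [List.ofFn_succ]
      simp [Fin.consEquiv, Fin.cons_zero, Fin.cons_succ]
    simp only [hsplit]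
    rw [inner_sum (a 0) (fun i => a i.succ) occ (!true) (IH (fun i => a i.succ)),
      inner_sum (a 0) (fun i => a i.succ) occ (!false) (IH (fun i => a i.succ))]
    rw [List.ofFn_succ]
    show _ = cnt n (a 0 :: List.ofFn fun i : Fin m => a i.succ) occ
    simp only [cnt, Bool.not_true, Bool.not_false]

lemma E_inj : ∀ {l : List ℕ} {h : ℕ}, Chn h l → ∀ {l' : List ℕ} {h' : ℕ}, Chn h' l' →
    l.length = l'.length → E l = E l' → l = l' := by
  intro l h c
  induction c with
  | single =>
    intro l' h' c' hlen _
    cases c' with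
    | single => rfl
    | cons_eq c'' => obtain ⟨t, rfl⟩ := c''.head; simp at hlen
    | cons_succ c'' => obtain ⟨t, rfl⟩ := c''.head; simp at hlen
  | @cons_eq h rest c ihc =>
    intro l' h' c' hlen hE
    obtain ⟨t, rfl⟩ := c.head
    rw [E_cons, if_pos rfl] at hE
    cases c' with
    | single => simp at hlen
    | @cons_eq h2 rest2 c2 =>
      obtain ⟨t2, rfl⟩ := c2.head
      rw [E_cons, if_pos rfl] at hE
      simp only [List.length_cons] at hlen
      have heq := ihc c2 (by simp; omega) (by omega)
      injection heq with e1 e2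
      subst e1; subst e2; rfl
    | @cons_succ h2 rest2 c2 =>
      obtain ⟨t2, rfl⟩ := c2.head
      rw [E_cons, if_neg (by omega)] at hE
      omega
  | @cons_succ h rest c ihc =>
    intro l' h' c' hlen hE
    obtain ⟨t, rfl⟩ := c.head
    rw [E_cons, if_neg (by omega)] at hE
    cases c' with
    | single => simp at hlen
    | @cons_eq h2 rest2 c2 =>
      obtain ⟨t2, rfl⟩ := c2.head
      rw [E_cons, if_pos rfl] at hE
      omega
    | @cons_succ h2 rest2 c2 =>
      obtain ⟨t2, rfl⟩ := c2.head
      rw [E_cons, if_neg (by omega)] at hE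
      simp only [List.length_cons] at hlen
      have heq := ihc c2 (by simp; omega) (by omega)
      injection heq with e1 e2
      subst e1; subst e2; rfl

lemma chain_head (k : ℕ) (α : Fin (k + 2) → ℕ) :
    (List.ofFn fun i : Fin (k + 1) => α i.succ)
      = α 1 :: List.ofFn fun i : Fin k => α i.succ.succ := by
  rw [List.ofFn_succ]
  have h1 : Fin.succ (0 : Fin (k + 1)) = (1 : Fin (k + 2)) := by
    ext
    simp
  rw [h1]

lemma toChn : ∀ (l : List ℕ) (a : ℕ),
    List.Chain' (fun x y => y = x ∨ y + 1 = x) (a :: l) →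
    (a :: l).getLast? = some 2 → Chn a (a :: l) := by
  intro l
  induction l with
  | nil =>
    intro a _ hlast
    simp only [List.getLast?_singleton, Option.some.injEq] at hlast
    subst hlast
    exact Chn.single
  | cons b t ih =>
    intro a hch hlast
    rw [List.Chain', List.isChain_cons_cons] at hch
    rw [List.getLast?_cons_cons] at hlast
    have hc := ih b hch.2 hlast
    rcases hch.1 with rfl | rfl
    · exact hc.cons_eq
    · exact hc.cons_succ

lemma g_formula (k : ℕ) (α : Fin (k + 2) → ℕ)
    (hr : ∀ i, 1 ≤ α i ∧ α i ≤ k + 2)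
    (hst : Staircase (by omega) α) :
    Chn (α 1) (List.ofFn fun i : Fin (k + 1) => α i.succ) ∧
    g (k + 2) α = 1 + 2 * E (List.ofFn fun i : Fin (k + 1) => α i.succ) := by
  obtain ⟨h01, hstep, hlast⟩ := hst
  have hchain : List.Chain' (fun x y => y = x ∨ y + 1 = x)
      (List.ofFn fun i : Fin (k + 1) => α i.succ) := by
    rw [List.Chain', List.isChain_iff_getElem]
    intro j hj
    simp only [List.length_ofFn] at hj
    rw [List.getElem_ofFn, List.getElem_ofFn]
    exact hstep (j + 1) (by omega)
  have hlast' : (List.ofFn fun i : Fin (k + 1) => α i.succ).getLast? = some 2 := by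
    rw [List.getLast?_eq_getLast (by rw [chain_head]; simp),
      List.getLast_ofFn]
    exact congrArg some hlast
  have hc : Chn (α 1) (List.ofFn fun i : Fin (k + 1) => α i.succ) := by
    rw [chain_head] at hchain hlast' ⊢
    exact toChn _ (α 1) hchain hlast'
  refine ⟨hc, ?_⟩
  have hstep0 : naplesStep (k + 2) 1 ∅ (α 0) false = some (α 0) :=
    step_free false (by simp)
  have hpred : ∀ β : Fin (k + 1) → Bool, parksUnder (k + 2) α β =
      runPark (naplesStep (k + 2) 1)
        (List.ofFn fun i : Fin (k + 1) => (α i.succ, !(β i))) (insert (α 0) ∅) := by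
    intro β
    unfold parksUnder parksNaples
    have hlist : (List.ofFn fun i : Fin (k + 2) =>
        (α i, if h : 0 < i.1 then !(β ⟨i.1 - 1, by have := i.2; omega⟩) else false))
        = (α 0, false) :: List.ofFn fun i : Fin (k + 1) => (α i.succ, !(β i)) := by
      rw [List.ofFn_succ]
      congr 1
      all_goals try (congr 1; funext i; simp [Fin.val_succ])
      all_goals simp
    rw [hlist]
    simp [runPark, hstep0]
  have hfilter : (Finset.univ.filter
      fun β : Fin (k + 1) → Bool => parksUnder (k + 2) α β = true) =
      (Finset.univ.filter fun β : Fin (k + 1) → Bool =>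
        runPark (naplesStep (k + 2) 1)
          (List.ofFn fun i : Fin (k + 1) => (α i.succ, !(β i)))
          (insert (α 0) ∅) = true) := by
    apply Finset.filter_congr
    intro β _
    rw [hpred β]
  have hg2 : g (k + 2) α = (Finset.univ.filter fun β : Fin (k + 1) → Bool =>
      runPark (naplesStep (k + 2) 1)
        (List.ofFn fun i : Fin (k + 1) => (α i.succ, !(β i)))
        (insert (α 0) ∅) = true).card := by
    rw [← hfilter]; rfl
  rw [hg2]
  have hocc : insert (α 0) (∅ : Finset ℕ) = Finset.Icc (α 0) (α 0) := by
    rw [Finset.Icc_self]; rfl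
  rw [hocc]
  rw [card_eq (k + 2) (k + 1) (fun i => α i.succ) (Finset.Icc (α 0) (α 0))]
  have h01' : α 0 = α 1 := h01
  have h1le := (hr 1).1
  have h1ub := (hr 1).2
  have c1 : 1 ≤ α 0 := (hr 0).1
  have c3 : α 0 ≤ k + 2 := (hr 0).2
  have c4 : α 0 ≤ α 1 + 1 := h01'.le.trans (Nat.le_succ _)
  have c5 : α 1 ≤ α 0 + 1 := h01'.symm.le.trans (Nat.le_succ _)
  have c6 : α 1 ≤ α 0 := le_of_eq h01'.symm
  have c7 : (List.ofFn fun i : Fin (k + 1) => α i.succ).length + (α 0 - α 0 + 1) = k + 2 := by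
    simp
  have hm := main hc (α 0) (α 0) (k + 2) c1 le_rfl c3 c4 c5 c6 c7
  clear hstep hchain hlast' hc hpred hfilter hg2 hocc hlast h01 hr hstep0 c1 c3 c4 c5 c6 c7 h1le h1ub
  omega

end Sx

/-- `g` is injective on staircase tuples. -/
theorem stmt12 (n : ℕ) (hn : 2 ≤ n) (α α' : Fin n → ℕ)
    (hr : ∀ i, 1 ≤ α i ∧ α i ≤ n) (hr' : ∀ i, 1 ≤ α' i ∧ α' i ≤ n)
    (hA : Staircase hn α) (hA' : Staircase hn α')
    (hg : g n α = g n α') : α = α' := by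
  obtain ⟨k, rfl⟩ : ∃ k, n = k + 2 := ⟨n - 2, by omega⟩
  obtain ⟨hc, hgf⟩ := Sx.g_formula k α hr hA
  obtain ⟨hc', hgf'⟩ := Sx.g_formula k α' hr' hA'
  have hE : Sx.E (List.ofFn fun i : Fin (k + 1) => α i.succ)
      = Sx.E (List.ofFn fun i : Fin (k + 1) => α' i.succ) := by omega
  have hchains := Sx.E_inj hc hc' (by simp) hE
  have hfun : (fun i : Fin (k + 1) => α i.succ) = fun i : Fin (k + 1) => α' i.succ :=
    List.ofFn_injective hchains
  funext i
  rcases i with ⟨iv, hiv⟩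
  cases iv with
  | zero =>
    have e1 : α (Fin.succ (⟨0, by omega⟩ : Fin (k + 1)))
        = α' (Fin.succ (⟨0, by omega⟩ : Fin (k + 1))) := congrFun hfun ⟨0, by omega⟩
    exact hA.1.trans (e1.trans hA'.1.symm)
  | succ j =>
    exact congrFun hfun ⟨j, by omega⟩
end

section
/- Every tuple α ∈ {1,...,n}^n with α_1 = α_2, α_{i+1} ∈ {α_i − 1, α_i} for all i, and α_n = 2, has g(α) odd. -/
/-- The successor relation for staircase lists. -/
def wrel (x y : ℕ) : Prop := y = x ∨ y + 1 = x

def walkP (n : ℕ) : ℕ → ℕ → List (ℕ × Bool) → Bool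
  | _, _, [] => true
  | l, h, (c, b) :: rest =>
    if c < l ∨ (c = l ∧ b) then walkP n (l - 1) h rest
    else if h < n then walkP n l (h + 1) rest
    else false

def cnt (n : ℕ) : ℕ → ℕ → List ℕ → ℕ
  | _, _, [] => 1
  | l, h, c :: cs =>
    (if c ≤ l then cnt n (l - 1) h cs
     else if h < n then cnt n l (h + 1) cs else 0)
    + (if c < l then cnt n (l - 1) h cs
       else if h < n then cnt n l (h + 1) cs else 0)

lemma firstFree_nil (occ : Finset ℕ) : firstFree occ [] = none := rfl

lemma firstFree_cons_pos (occ : Finset ℕ) (a : ℕ) (rest : List ℕ) (h : a ∉ occ) :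
    firstFree occ (a :: rest) = some a := by
  unfold firstFree
  rw [List.find?_cons_of_pos]
  simpa using h

lemma firstFree_cons_neg (occ : Finset ℕ) (a : ℕ) (rest : List ℕ) (h : a ∈ occ) :
    firstFree occ (a :: rest) = firstFree occ rest := by
  unfold firstFree
  rw [List.find?_cons_of_neg]
  simpa using h

lemma firstFree_range'_some (l h s k : ℕ) (hs : l ≤ s) (hsh : s ≤ h + 1)
    (hk : h + 1 < s + k) :
    firstFree (Finset.Icc l h) (List.range' s k) = some (h + 1) := by
  induction k generalizing s with
  | zero => omega
  | succ k ih =>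
    rw [List.range'_succ]
    rcases eq_or_lt_of_le hsh with he | hlt
    · rw [firstFree_cons_pos _ _ _ (by simp [Finset.mem_Icc]; omega), he]
    · rw [firstFree_cons_neg _ _ _ (by simp [Finset.mem_Icc]; omega)]
      exact ih (s + 1) (by omega) (by omega) (by omega)

lemma firstFree_range'_none (l h s k : ℕ) (hs : l ≤ s) (hk : s + k ≤ h + 1) :
    firstFree (Finset.Icc l h) (List.range' s k) = none := by
  rw [firstFree, List.find?_eq_none]
  intro x hx
  simp only [List.mem_range'_1] at hx
  simp [Finset.mem_Icc]
  omega

lemma step_free (n : ℕ) (occ : Finset ℕ) (a : ℕ) (b : Bool) (h : a ∉ occ) :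
    naplesStep n 1 occ a b = some a := by
  simp [naplesStep, h]

lemma step_back (n l h c : ℕ) (h2 : 2 ≤ c) (hc : c = l) (hlh : l ≤ h) :
    naplesStep n 1 (Finset.Icc l h) c true = some (l - 1) := by
  have hmem : ¬ (c ∉ Finset.Icc l h) := by simp [Finset.mem_Icc]; omega
  have h1 : max (c - 1) 1 = c - 1 := by omega
  have h2' : min 1 (c - 1) = 1 := by omega
  have hff : firstFree (Finset.Icc l h) [c - 1] = some (c - 1) :=
    firstFree_cons_pos _ _ _ (by simp [Finset.mem_Icc]; omega)
  rw [naplesStep, if_neg hmem]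
  simp only [h1, h2', List.range'_one, List.reverse_singleton, if_true, hff]
  rw [hc]

lemma step_fwd (n l h c : ℕ) (b : Bool) (hl : l ≤ c) (hch : c ≤ h) (hc2 : 2 ≤ c)
    (hb : b = false ∨ l < c) (hn : h < n) :
    naplesStep n 1 (Finset.Icc l h) c b = some (h + 1) := by
  have hmem : ¬ (c ∉ Finset.Icc l h) := by simp [Finset.mem_Icc]; omega
  have hf : firstFree (Finset.Icc l h) (List.range' (c + 1) (n - c)) = some (h + 1) :=
    firstFree_range'_some l h (c + 1) (n - c) (by omega) (by omega) (by omega)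
  rw [naplesStep, if_neg hmem]
  rcases hb with rfl | hlc
  · simpa using hf
  · have h1 : max (c - 1) 1 = c - 1 := by omega
    have h2' : min 1 (c - 1) = 1 := by omega
    have hff : firstFree (Finset.Icc l h) [c - 1] = firstFree (Finset.Icc l h) [] :=
      firstFree_cons_neg _ _ _ (by simp [Finset.mem_Icc]; omega)
    cases b
    · simpa using hf
    · simp only [h1, h2', List.range'_one, List.reverse_singleton, if_true, hff,
        firstFree_nil]
      simpa using hf

lemma step_fail (n l c : ℕ) (b : Bool) (hl : l ≤ c) (hch : c ≤ n) (hc2 : 2 ≤ c)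
    (hb : b = false ∨ l < c) :
    naplesStep n 1 (Finset.Icc l n) c b = none := by
  have hmem : ¬ (c ∉ Finset.Icc l n) := by simp [Finset.mem_Icc]; omega
  have hf : firstFree (Finset.Icc l n) (List.range' (c + 1) (n - c)) = none :=
    firstFree_range'_none l n (c + 1) (n - c) (by omega) (by omega)
  rw [naplesStep, if_neg hmem]
  rcases hb with rfl | hlc
  · simpa using hf
  · have h1 : max (c - 1) 1 = c - 1 := by omega
    have h2' : min 1 (c - 1) = 1 := by omega
    have hff : firstFree (Finset.Icc l n) [c - 1] = firstFree (Finset.Icc l n) [] :=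
      firstFree_cons_neg _ _ _ (by simp [Finset.mem_Icc]; omega)
    cases b
    · simpa using hf
    · simp only [h1, h2', List.range'_one, List.reverse_singleton, if_true, hff,
        firstFree_nil]
      simpa using hf

lemma insert_low (l h : ℕ) (hl : 1 ≤ l) (hlh : l ≤ h + 1) :
    insert (l - 1) (Finset.Icc l h) = Finset.Icc (l - 1) h := by
  ext x; simp [Finset.mem_Icc]; omega

lemma insert_high (l h : ℕ) (hlh : l ≤ h + 1) :
    insert (h + 1) (Finset.Icc l h) = Finset.Icc l (h + 1) := by
  ext x; simp [Finset.mem_Icc]; omega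

lemma bridge (n : ℕ) : ∀ (cars : List (ℕ × Bool)) (l h : ℕ),
    1 ≤ l → l ≤ h → h ≤ n →
    List.Chain' wrel (cars.map Prod.fst) →
    (∀ p ∈ cars, 2 ≤ p.1) →
    (∀ c b rest, cars = (c, b) :: rest → l ≤ c + 1 ∧ c ≤ h) →
    runPark (naplesStep n 1) cars (Finset.Icc l h) = walkP n l h cars := by
  intro cars
  induction cars with
  | nil => intro l h _ _ _ _ _ _; rfl
  | cons p rest ih =>
    obtain ⟨c, b⟩ := p
    intro l h hl1 hlh hhn hchain hge2 hhead
    obtain ⟨hlc, hch⟩ := hhead c b rest rfl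
    have hc2 : 2 ≤ c := hge2 (c, b) (by simp)
    -- facts about the next car, if any
    have hnext : ∀ c2 b2 rest2, rest = (c2, b2) :: rest2 → (c2 = c ∨ c2 + 1 = c) ∧ 2 ≤ c2 := by
      intro c2 b2 rest2 hr
      subst hr
      refine ⟨?_, hge2 (c2, b2) (by simp)⟩
      have := (List.isChain_cons_cons.mp hchain).1
      exact this
    have hchain' : List.Chain' wrel (rest.map Prod.fst) := by
      rcases rest with _ | ⟨q, rest2⟩
      · exact List.isChain_nil
      · exact (List.isChain_cons_cons.mp hchain).2
    have hge2' : ∀ p ∈ rest, 2 ≤ p.1 := fun q hq => hge2 q (by simp [hq])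
    by_cases hcl : c < l
    · -- c = l - 1, free spot below
      have hce : c = l - 1 := by omega
      have hstep : naplesStep n 1 (Finset.Icc l h) c b = some c :=
        step_free _ _ _ _ (by simp [Finset.mem_Icc]; omega)
      have hins : insert c (Finset.Icc l h) = Finset.Icc (l - 1) h := by
        rw [hce]; exact insert_low l h hl1 (by omega)
      simp only [runPark, hstep, hins, walkP]
      rw [if_pos (show c < l ∨ (c = l ∧ b = true) from Or.inl hcl)]
      exact ih (l - 1) h (by omega) (by omega) hhn hchain' hge2'
        (fun c2 b2 rest2 hr => by
          obtain ⟨h1, h2⟩ := hnext c2 b2 rest2 hr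
          constructor <;> omega)
    · by_cases hback : c = l ∧ b = true
      · -- back up to l - 1
        have hstep : naplesStep n 1 (Finset.Icc l h) c b = some (l - 1) := by
          rw [hback.2]; exact step_back n l h c hc2 hback.1 hlh
        simp only [runPark, hstep, insert_low l h hl1 (by omega), walkP]
        rw [if_pos (show c < l ∨ (c = l ∧ b = true) from Or.inr hback)]
        exact ih (l - 1) h (by omega) (by omega) hhn hchain' hge2'
          (fun c2 b2 rest2 hr => by
            obtain ⟨h1, h2⟩ := hnext c2 b2 rest2 hr
            constructor <;> omega)
      · -- forward
        have hb : b = false ∨ l < c := by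
          cases b
          · exact Or.inl rfl
          · right
            have : c ≠ l := fun hce => hback ⟨hce, rfl⟩
            omega
        have hcond : ¬ (c < l ∨ (c = l ∧ b = true)) := by
          rintro (h' | ⟨h1', h2'⟩)
          · omega
          · rcases hb with hb | hb
            · rw [hb] at h2'; exact Bool.false_ne_true h2'
            · omega
        by_cases hhn' : h < n
        · have hstep : naplesStep n 1 (Finset.Icc l h) c b = some (h + 1) :=
            step_fwd n l h c b (by omega) hch hc2 hb hhn'
          simp only [runPark, hstep, insert_high l h (by omega), walkP]
          rw [if_neg hcond, if_pos hhn']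
          exact ih l (h + 1) hl1 (by omega) (by omega) hchain' hge2'
            (fun c2 b2 rest2 hr => by
              obtain ⟨h1, h2⟩ := hnext c2 b2 rest2 hr
              constructor <;> omega)
        · have hhe : h = n := by omega
          have hstep : naplesStep n 1 (Finset.Icc l h) c b = none := by
            rw [hhe]; exact step_fail n l c b (by omega) (by omega) hc2 hb
          simp only [runPark, hstep, walkP]
          rw [if_neg hcond, if_neg hhn']

lemma card_split (m : ℕ) (p : (Fin (m + 1) → Bool) → Prop) [DecidablePred p] :
    (Finset.univ.filter p).card
      = (Finset.univ.filter (fun f : Fin m → Bool => p (Fin.cons true f))).card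
        + (Finset.univ.filter (fun f : Fin m → Bool => p (Fin.cons false f))).card := by
  rw [Finset.card_filter, Finset.card_filter, Finset.card_filter]
  rw [← Fintype.sum_equiv (Fin.consEquiv (fun _ : Fin (m + 1) => Bool))
    (fun x => if p ((Fin.consEquiv (fun _ : Fin (m + 1) => Bool)) x) then 1 else 0)
    (fun g => if p g then (1 : ℕ) else 0) (fun x => rfl)]
  rw [Fintype.sum_prod_type]
  rw [Fintype.sum_bool]
  rfl

lemma cnt_eq (n : ℕ) : ∀ (m : ℕ) (f : Fin m → ℕ) (l h : ℕ),
    (Finset.univ.filter (fun β : Fin m → Bool =>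
        walkP n l h (List.ofFn (fun i => (f i, !(β i)))) = true)).card
      = cnt n l h (List.ofFn f) := by
  intro m
  induction m with
  | zero =>
    intro f l h
    simp [walkP, cnt, List.ofFn_zero]
  | succ m ih =>
    intro f l h
    rw [card_split m (fun β : Fin (m + 1) → Bool =>
      walkP n l h (List.ofFn (fun i => (f i, !(β i)))) = true)]
    simp only [List.ofFn_succ, Fin.cons_succ, Fin.cons_zero]
    rw [cnt]
    simp only [walkP]
    rcases lt_trichotomy (f 0) l with h1 | h1 | h1
    · have hle : f 0 ≤ l := le_of_lt h1
      simp only [h1, hle, true_or, if_true, if_pos, Bool.not_true, Bool.not_false]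
      rw [ih (fun i => f i.succ) (l - 1) h]
    · have hle : f 0 ≤ l := le_of_eq h1
      have hnlt : ¬ (f 0 < l) := by omega
      simp only [h1, hle, hnlt, Bool.not_true, Bool.not_false, lt_self_iff_false,
        Bool.false_eq_true, and_false, and_true, false_or, or_false, if_false,
        eq_self_iff_true, if_true, le_refl]
      by_cases hn : h < n
      · simp only [hn, if_true]
        rw [ih (fun i => f i.succ) (l - 1) h, ih (fun i => f i.succ) l (h + 1)]
        omega
      · simp only [hn, if_false]
        rw [ih (fun i => f i.succ) (l - 1) h]
        simp
    · have hnle : ¬ (f 0 ≤ l) := by omega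
      have hnlt : ¬ (f 0 < l) := by omega
      have hne : ¬ (f 0 = l) := by omega
      simp only [hnle, hnlt, hne, Bool.not_true, Bool.not_false, false_and, false_or,
        if_false]
      by_cases hn : h < n
      · simp only [hn, if_true]
        rw [ih (fun i => f i.succ) l (h + 1)]
      · simp only [hn, if_false]
        simp

lemma chain_head_le : ∀ (xs : List ℕ) (c : ℕ), List.Chain' wrel (c :: xs) →
    (c :: xs).getLast? = some 2 → c ≤ xs.length + 2 := by
  intro xs
  induction xs with
  | nil => intro c _ hl; simp at hl; omega
  | cons y t ih =>
    intro c hc hl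
    have h1 : wrel c y := (List.isChain_cons_cons.mp hc).1
    have h2 := ih y (List.isChain_cons_cons.mp hc).2 (by rwa [List.getLast?_cons_cons] at hl)
    rcases h1 with h | h <;> simp [List.length_cons] <;> omega

lemma chain_ge2 : ∀ (xs : List ℕ), List.Chain' wrel xs →
    xs.getLast? = some 2 → ∀ x ∈ xs, 2 ≤ x := by
  intro xs
  induction xs with
  | nil => intro _ _ x hx; simp at hx
  | cons c t ih =>
    intro hc hl x hx
    rcases t with _ | ⟨y, t2⟩
    · simp at hl hx; omega
    · have h1 : wrel c y := (List.isChain_cons_cons.mp hc).1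
      have h2 := ih (List.isChain_cons_cons.mp hc).2 (by rwa [List.getLast?_cons_cons] at hl)
      rcases List.mem_cons.mp hx with rfl | hx2
      · have := h2 y (by simp)
        rcases h1 with h | h <;> omega
      · exact h2 x hx2

lemma odd_cnt (n : ℕ) : ∀ (cs : List ℕ) (l h : ℕ),
    List.Chain' wrel (l :: cs) → (l :: cs).getLast? = some 2 →
    l ≤ h → h + cs.length + 2 = n + l →
    Odd (cnt n l h (l :: cs)) := by
  intro cs
  induction cs with
  | nil =>
    intro l h _ hlast hlh hlen
    have hl2 : l = 2 := by simpa using hlast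
    have hhn : h = n := by simp at hlen; omega
    subst hl2; subst hhn
    simp [cnt]
  | cons c' rest ih =>
    intro l h hchain hlast hlh hlen
    have h2l : 2 ≤ l := chain_ge2 _ hchain hlast l (by simp)
    have hrel : wrel l c' := (List.isChain_cons_cons.mp hchain).1
    have hch' : List.Chain' wrel (c' :: rest) := (List.isChain_cons_cons.mp hchain).2
    have hlast' : (c' :: rest).getLast? = some 2 := by
      rwa [List.getLast?_cons_cons] at hlast
    rw [cnt, if_pos (le_refl l), if_neg (lt_irrefl l)]
    rcases hrel with hflat | hdown
    · -- c' = l (flat step)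
      subst hflat
      have hbound : c' ≤ rest.length + 2 := chain_head_le rest c' hch' hlast'
      have hn : h < n := by simp [List.length_cons] at hlen; omega
      rw [if_pos hn]
      have hodd : Odd (cnt n c' (h + 1) (c' :: rest)) := by
        apply ih c' (h + 1) hch' hlast' (by omega)
        simp [List.length_cons] at hlen ⊢; omega
      have heven : Even (cnt n (c' - 1) h (c' :: rest)) := by
        rw [cnt, if_neg (by omega : ¬ c' ≤ c' - 1), if_neg (by omega : ¬ c' < c' - 1)]
        by_cases hn' : h < n
        · rw [if_pos hn']; exact ⟨_, rfl⟩
        · rw [if_neg hn']; exact ⟨_, rfl⟩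
      exact heven.add_odd hodd
    · -- c' + 1 = l (down step)
      have hodd : Odd (cnt n (l - 1) h (c' :: rest)) := by
        have : l - 1 = c' := by omega
        rw [this]
        apply ih c' h hch' hlast' (by omega)
        simp [List.length_cons] at hlen ⊢; omega
      have heven : Even (if h < n then cnt n l (h + 1) (c' :: rest) else 0) := by
        by_cases hn' : h < n
        · rw [if_pos hn']
          rw [cnt, if_pos (by omega : c' ≤ l), if_pos (by omega : c' < l)]
          exact ⟨_, rfl⟩
        · rw [if_neg hn']; exact ⟨0, rfl⟩
      exact hodd.add_even heven

lemma chain'_ofFn {γ : Type*} {r : γ → γ → Prop} :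
    ∀ (k : ℕ) (f : Fin (k + 1) → γ),
    (∀ (i : ℕ) (h : i + 1 < k + 1), r (f ⟨i, by omega⟩) (f ⟨i + 1, h⟩)) →
    List.Chain' r (List.ofFn f) := by
  intro k
  induction k with
  | zero => intro f _; exact List.isChain_singleton _
  | succ k ih =>
    intro f hr
    simp only [List.Chain']
    rw [List.ofFn_succ, List.isChain_cons]
    constructor
    · intro b hb
      rw [List.ofFn_succ] at hb
      simp only [List.head?_cons, Option.mem_def, Option.some.injEq] at hb
      subst hb
      exact hr 0 (by omega)
    · apply ih (fun i => f i.succ)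
      intro i h
      have h2 := hr (i + 1) (by omega)
      convert h2 using 2 <;> apply Fin.ext <;> simp [Fin.val_succ]

lemma getLast?_ofFn_succ {γ : Type*} (m : ℕ) (f : Fin (m + 1) → γ) :
    (List.ofFn f).getLast? = some (f (Fin.last m)) := by
  rw [List.ofFn_succ']
  simp

/-- Every staircase tuple has odd `g`. -/
theorem stmt16 (n : ℕ) (hn : 2 ≤ n) (α : Fin n → ℕ)
    (hα : ∀ i, 1 ≤ α i ∧ α i ≤ n) (hA : Staircase hn α) :
    Odd (g n α) := by
  obtain ⟨m, rfl⟩ : ∃ m, n = m + 2 := ⟨n - 2, by omega⟩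
  obtain ⟨h01, hstep, hlastα⟩ := hA
  set a : ℕ := α ⟨0, by omega⟩ with ha
  -- the preference list of cars 2..n
  set f : Fin (m + 1) → ℕ := fun i => α i.succ with hf
  have hf0 : f 0 = a := by
    rw [h01]; rfl
  have hgl : (List.ofFn f).getLast? = some 2 := by
    rw [getLast?_ofFn_succ]
    have : f (Fin.last m) = 2 := by
      rw [hf]
      convert hlastα using 2
      exact Fin.ext (by simp only [Fin.val_succ, Fin.val_last, Fin.val_mk]; omega)
    rw [this]
  have hchainf : List.Chain' wrel (List.ofFn f) := by
    apply chain'_ofFn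
    intro i h
    have h2 := hstep (i + 1) (by omega)
    rcases h2 with h2 | h2
    · exact Or.inl h2
    · exact Or.inr h2
  have hge2f : ∀ x ∈ List.ofFn f, 2 ≤ x := chain_ge2 _ hchainf hgl
  have ha1 : 1 ≤ a := (hα ⟨0, by omega⟩).1
  have han : a ≤ m + 2 := (hα ⟨0, by omega⟩).2
  -- the key simulation identity
  have key : ∀ β : Fin (m + 1) → Bool,
      parksUnder (m + 2) α β
        = walkP (m + 2) a a (List.ofFn fun i : Fin (m + 1) => (f i, !(β i))) := by
    intro β
    rw [parksUnder, parksNaples]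
    rw [List.ofFn_succ]
    have hcoin0 : (if h : 0 < ((0 : Fin (m + 2))).1 then
        !(β ⟨(0 : Fin (m + 2)).1 - 1, by omega⟩) else false) = false := by
      simp
    have hcoin : ∀ i : Fin (m + 1), (if h : 0 < (i.succ).1 then
        !(β ⟨(i.succ).1 - 1, by have := i.succ.2; omega⟩) else false) = !(β i) := by
      intro i
      rw [dif_pos (by simp [Fin.val_succ])]
      congr 1
    simp only [hcoin0, hcoin]
    have hstep1 : naplesStep (m + 2) 1 ∅ (α 0) false = some (α 0) :=
      step_free _ _ _ _ (Finset.notMem_empty _)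
    have hocc : insert (α 0) (∅ : Finset ℕ) = Finset.Icc a a := by
      rw [Finset.Icc_self, ha]
      simp
    simp only [runPark, hstep1, hocc]
    apply bridge (m + 2) (List.ofFn fun i : Fin (m + 1) => (f i, !(β i))) a a ha1 le_rfl han
    · rw [List.map_ofFn]
      exact hchainf
    · intro p hp
      rw [List.mem_ofFn] at hp
      obtain ⟨i, rfl⟩ := hp
      exact hge2f (f i) (by rw [List.mem_ofFn]; exact ⟨i, rfl⟩)
    · intro c b rest heq
      rw [List.ofFn_succ] at heq
      have hc : c = f 0 := by
        have := congrArg List.head? heq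
        simp at this
        exact this.1.symm
      rw [hc, hf0]
      omega
  -- rewrite g as a count of walks and conclude
  rw [g]
  have : (Finset.univ.filter
        (fun β : Fin (m + 2 - 1) → Bool => parksUnder (m + 2) α β = true)).card
      = (Finset.univ.filter
        (fun β : Fin (m + 1) → Bool =>
          walkP (m + 2) a a (List.ofFn fun i : Fin (m + 1) => (f i, !(β i))) = true)).card := by
    apply Finset.card_bij (fun β _ => β)
    · intro β hβ
      simp only [Finset.mem_filter, Finset.mem_univ, true_and] at hβ ⊢
      exact (key β).symm.trans hβ
    · intro β1 β2 _ _ h; exact h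
    · intro β hβ
      refine ⟨β, ?_, rfl⟩
      simp only [Finset.mem_filter, Finset.mem_univ, true_and] at hβ ⊢
      exact (key β).trans hβ
  rw [this, cnt_eq]
  have hlist : List.ofFn f = a :: List.ofFn (fun i : Fin m => f i.succ) := by
    rw [List.ofFn_succ, hf0]
  rw [hlist]
  apply odd_cnt
  · show List.Chain' wrel (a :: List.ofFn (fun i : Fin m => f i.succ))
    rw [← hlist]; exact hchainf
  · show (a :: List.ofFn (fun i : Fin m => f i.succ)).getLast? = some 2
    rw [← hlist]; exact hgl
  · exact le_rfl
  · simp only [List.length_ofFn]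
    ring
end
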